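/- For all integers n ≥ 6, ps(K_5 + K_5 + K_n) = 3, i.e., the disjoint union of two copies of K_5 and a copy of K_n admits an edge labelling with labels in {1,2,3} giving all vertices pairwise distinct products of incident labels, and no such labelling exists with labels in {1,2}. -/

import Mathlib

open Finset

open scoped Classical in
/-- The product degree of vertex `v`: the product of the labels of the edges incident with `v`. -/
noncomputable def pdeg {V : Type*} [Fintype V] (G : SimpleGraph V) (w : Sym2 V → ℕ) (v : V) : ℕ :=
  ∏ u ∈ Finset.univ.filter (fun u => G.Adj v u), w s(v, u)

/-- A labelling is product-irregular if distinct vertices have distinct product degrees. -/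
def ProductIrregular {V : Type*} [Fintype V] (G : SimpleGraph V) (w : Sym2 V → ℕ) : Prop :=
  Function.Injective (pdeg G w)

/-- The product irregularity strength: the least `s` admitting a product-irregular labelling
with labels in `{1,…,s}`. -/
noncomputable def ps {V : Type*} [Fintype V] (G : SimpleGraph V) : ℕ :=
  sInf {s : ℕ | ∃ w : Sym2 V → ℕ,
    (∀ u v : V, G.Adj u v → w s(u, v) ∈ Finset.Icc 1 s) ∧ ProductIrregular G w}
/-- The matrix `M_n(x,y,z)` (1-based indices translated to `Fin n`): zero diagonal,
`x` when `j ≤ n - i + 1` (and `i ≠ j`), `z` at positions `(k,n)` and `(n,k)` where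
`k = ⌈n/2⌉ + 1`, and `y` otherwise. -/
def Mmat (n x y z : ℕ) : Matrix (Fin n) (Fin n) ℕ := fun i j =>
  if i = j then 0
  else if (j : ℕ) + 1 ≤ n - (i : ℕ) then x
  else if (((i : ℕ) + 1 = (n + 1) / 2 + 1 ∧ (j : ℕ) + 1 = n) ∨
           ((i : ℕ) + 1 = n ∧ (j : ℕ) + 1 = (n + 1) / 2 + 1)) then z
  else y

/-- Product of the nonzero entries of row `i`. -/
def rowProd {ι : Type*} [Fintype ι] [DecidableEq ι] (M : Matrix ι ι ℕ) (i : ι) : ℕ :=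
  ∏ j ∈ Finset.univ.filter (fun j => M i j ≠ 0), M i j

/-- A square matrix is product-irregular if distinct rows have distinct products of
nonzero entries. -/
def MatPI {ι : Type*} [Fintype ι] [DecidableEq ι] (M : Matrix ι ι ℕ) : Prop :=
  Function.Injective (rowProd M)

/-- Component index for a three-part sum type. -/
def comp3 {n m l : ℕ} : Fin n ⊕ Fin m ⊕ Fin l → ℕ :=
  Sum.elim (fun _ => 0) (Sum.elim (fun _ => 1) (fun _ => 2))

/-- The disjoint union `K_n + K_m + K_l` of three complete graphs. -/
def cliqueTriple (n m l : ℕ) : SimpleGraph (Fin n ⊕ Fin m ⊕ Fin l) where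
  Adj a b := a ≠ b ∧ comp3 a = comp3 b
  symm := ⟨fun a b h => ⟨h.1.symm, h.2.symm⟩⟩
  loopless := ⟨fun a h => h.1 rfl⟩

/-! ### Auxiliary lemmas -/

lemma pow23 {a b c d : ℕ} (h : 2^a*3^b = 2^c*3^d) : a = c ∧ b = d := by
  have h2 := congrArg (fun m => Nat.factorization m 2) h
  have h3 := congrArg (fun m => Nat.factorization m 3) h
  simp [Nat.factorization_mul, Nat.Prime.factorization_pow, (by norm_num : Nat.Prime 2),
    (by norm_num : Nat.Prime 3), Nat.Prime.factorization] at h2 h3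
  omega

lemma card_filter_fin (n : ℕ) (q : ℕ → Prop) [DecidablePred q] :
    ((Finset.univ : Finset (Fin n)).filter (fun j => q j.val)).card
      = ((Finset.range n).filter q).card := by
  have h : ((Finset.range n).filter q)
      = ((Finset.univ : Finset (Fin n)).filter (fun j => q j.val)).image Fin.val := by
    ext a
    simp only [Finset.mem_image, Finset.mem_filter, Finset.mem_range, Finset.mem_univ, true_and]
    constructor
    · rintro ⟨ha, hq⟩; exact ⟨⟨a, ha⟩, hq, rfl⟩
    · rintro ⟨j, hq, rfl⟩; exact ⟨j.isLt, hq⟩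
  rw [h, Finset.card_image_of_injective _ Fin.val_injective]

lemma prod_pow_count {ι : Type*} [DecidableEq ι] (t : Finset ι) (g : ι → ℕ)
    (h : ∀ j ∈ t, g j = 1 ∨ g j = 2 ∨ g j = 3) :
    ∏ j ∈ t, g j
      = 2 ^ (t.filter (fun j => g j = 2)).card * 3 ^ (t.filter (fun j => g j = 3)).card := by
  classical
  induction t using Finset.induction with
  | empty => simp
  | @insert x s hx ih =>
    rw [Finset.prod_insert hx, ih (fun j hj => h j (Finset.mem_insert_of_mem hj)),
      Finset.filter_insert, Finset.filter_insert]
    rcases h x (Finset.mem_insert_self x s) with h1 | h2 | h3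
    · simp [h1]
    · rw [if_pos h2, if_neg (by omega), Finset.card_insert_of_notMem (by simp [hx]), h2]
      ring
    · rw [if_neg (by omega), if_pos h3, Finset.card_insert_of_notMem (by simp [hx]), h3]
      ring

/-! ### Entries of the matrix `Mmat n 2 3 1` -/

lemma Mmat_symm (n x y z : ℕ) (i j : Fin n) : Mmat n x y z i j = Mmat n x y z j i := by
  have hi := i.isLt; have hj := j.isLt
  unfold Mmat
  simp only [Fin.ext_iff]
  split_ifs <;> omega

lemma M_entry2 {n : ℕ} (i j : Fin n) :
    Mmat n 2 3 1 i j = 2 ↔ ((j : ℕ) ≠ (i : ℕ) ∧ (j : ℕ) + 1 ≤ n - (i : ℕ)) := by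
  have hi := i.isLt; have hj := j.isLt
  unfold Mmat
  simp only [Fin.ext_iff]
  split_ifs <;> simp only [true_iff, false_iff, iff_true, iff_false, not_and, ne_eq,
    not_not, not_or, not_le, not_lt] <;> omega

lemma M_entry1 {n : ℕ} (i j : Fin n) :
    Mmat n 2 3 1 i j = 1 ↔ ((j:ℕ) ≠ (i:ℕ) ∧ ¬ ((j : ℕ) + 1 ≤ n - (i : ℕ)) ∧
      (((i : ℕ) + 1 = (n + 1) / 2 + 1 ∧ (j : ℕ) + 1 = n) ∨
       ((i : ℕ) + 1 = n ∧ (j : ℕ) + 1 = (n + 1) / 2 + 1))) := by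
  have hi := i.isLt; have hj := j.isLt
  unfold Mmat
  simp only [Fin.ext_iff]
  split_ifs <;> simp only [true_iff, false_iff, iff_true, iff_false, not_and, ne_eq,
    not_not, not_or, not_le, not_lt] <;> omega

lemma M_entry123 {n : ℕ} (i j : Fin n) (hij : j ≠ i) :
    Mmat n 2 3 1 i j = 1 ∨ Mmat n 2 3 1 i j = 2 ∨ Mmat n 2 3 1 i j = 3 := by
  have hij' : ¬ ((i:ℕ) = (j:ℕ)) := by
    simpa [Fin.ext_iff, eq_comm] using hij
  unfold Mmat
  simp only [Fin.ext_iff]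
  split_ifs <;> simp_all

/-! ### Row products of `Mmat n 2 3 1` -/

def aFun (n i : ℕ) : ℕ := if i + i < n then n - 1 - i else n - i
def cFun (n i : ℕ) : ℕ := if i = (n+1)/2 ∨ i = n - 1 then 1 else 0
def bFun (n i : ℕ) : ℕ := n - 1 - aFun n i - cFun n i

lemma count2 (n : ℕ) (i : Fin n) :
    ((Finset.univ : Finset (Fin n)).filter (fun j => ¬ j = i ∧ Mmat n 2 3 1 i j = 2)).card
      = aFun n (i:ℕ) := by
  have h1 : ((Finset.univ : Finset (Fin n)).filter (fun j => ¬ j = i ∧ Mmat n 2 3 1 i j = 2))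
      = (Finset.univ.filter (fun j : Fin n => (j:ℕ) ≠ (i:ℕ) ∧ (j:ℕ) + 1 ≤ n - (i:ℕ))) := by
    apply Finset.filter_congr
    intro j _
    rw [M_entry2]
    simp [Fin.ext_iff]
  rw [h1, card_filter_fin n (fun j => j ≠ (i:ℕ) ∧ j + 1 ≤ n - (i:ℕ))]
  have h2 : ((Finset.range n).filter (fun j => j ≠ (i:ℕ) ∧ j + 1 ≤ n - (i:ℕ)))
      = (Finset.range (n - (i:ℕ))).erase (i:ℕ) := by
    ext a
    simp only [Finset.mem_filter, Finset.mem_range, Finset.mem_erase]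
    omega
  rw [h2]
  have hi := i.isLt
  unfold aFun
  by_cases hc : (i:ℕ) + (i:ℕ) < n
  · rw [if_pos hc, Finset.card_erase_of_mem (by simp only [Finset.mem_range]; omega),
      Finset.card_range]
    omega
  · rw [if_neg hc, Finset.erase_eq_of_notMem (by simp only [Finset.mem_range]; omega),
      Finset.card_range]

lemma count1 (n : ℕ) (hn : 6 ≤ n) (i : Fin n) :
    ((Finset.univ : Finset (Fin n)).filter (fun j => ¬ j = i ∧ Mmat n 2 3 1 i j = 1)).card
      = cFun n (i:ℕ) := by
  have h1 : ((Finset.univ : Finset (Fin n)).filter (fun j => ¬ j = i ∧ Mmat n 2 3 1 i j = 1))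
      = (Finset.univ.filter (fun j : Fin n => (j:ℕ) ≠ (i:ℕ) ∧ ¬ ((j:ℕ) + 1 ≤ n - (i:ℕ)) ∧
          (((i : ℕ) + 1 = (n + 1) / 2 + 1 ∧ (j:ℕ) + 1 = n) ∨
           ((i : ℕ) + 1 = n ∧ (j:ℕ) + 1 = (n + 1) / 2 + 1)))) := by
    apply Finset.filter_congr
    intro j _
    rw [M_entry1]
    simp [Fin.ext_iff]
  rw [h1, card_filter_fin n (fun j => j ≠ (i:ℕ) ∧ ¬ (j + 1 ≤ n - (i:ℕ)) ∧
          (((i : ℕ) + 1 = (n + 1) / 2 + 1 ∧ j + 1 = n) ∨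
           ((i : ℕ) + 1 = n ∧ j + 1 = (n + 1) / 2 + 1)))]
  have hi := i.isLt
  unfold cFun
  by_cases hc1 : (i:ℕ) = (n+1)/2
  · rw [if_pos (Or.inl hc1)]
    have : ((Finset.range n).filter (fun j => j ≠ (i:ℕ) ∧ ¬ (j + 1 ≤ n - (i:ℕ)) ∧
          (((i : ℕ) + 1 = (n + 1) / 2 + 1 ∧ j + 1 = n) ∨
           ((i : ℕ) + 1 = n ∧ j + 1 = (n + 1) / 2 + 1)))) = {n - 1} := by
      ext a
      simp only [Finset.mem_filter, Finset.mem_range, Finset.mem_singleton]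
      omega
    rw [this]; rfl
  · by_cases hc2 : (i:ℕ) = n - 1
    · rw [if_pos (Or.inr hc2)]
      have : ((Finset.range n).filter (fun j => j ≠ (i:ℕ) ∧ ¬ (j + 1 ≤ n - (i:ℕ)) ∧
            (((i : ℕ) + 1 = (n + 1) / 2 + 1 ∧ j + 1 = n) ∨
             ((i : ℕ) + 1 = n ∧ j + 1 = (n + 1) / 2 + 1)))) = {(n+1)/2} := by
        ext a
        simp only [Finset.mem_filter, Finset.mem_range, Finset.mem_singleton]
        omega
      rw [this]; rfl
    · rw [if_neg (by tauto)]
      have : ((Finset.range n).filter (fun j => j ≠ (i:ℕ) ∧ ¬ (j + 1 ≤ n - (i:ℕ)) ∧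
            (((i : ℕ) + 1 = (n + 1) / 2 + 1 ∧ j + 1 = n) ∨
             ((i : ℕ) + 1 = n ∧ j + 1 = (n + 1) / 2 + 1)))) = ∅ := by
        rw [Finset.filter_eq_empty_iff]
        intro a ha
        simp only [Finset.mem_range] at ha
        omega
      rw [this]; rfl

lemma prodM (n : ℕ) (hn : 6 ≤ n) (i : Fin n) :
    ∏ j ∈ Finset.univ.filter (fun j : Fin n => ¬ j = i), Mmat n 2 3 1 i j
      = 2 ^ aFun n (i:ℕ) * 3 ^ bFun n (i:ℕ) := by
  classical
  set t := Finset.univ.filter (fun j : Fin n => ¬ j = i) with ht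
  have hmem : ∀ j, j ∈ t → j ≠ i := by
    intro j hj; simpa [ht] using hj
  have h123 : ∀ j ∈ t, Mmat n 2 3 1 i j = 1 ∨ Mmat n 2 3 1 i j = 2 ∨ Mmat n 2 3 1 i j = 3 :=
    fun j hj => M_entry123 i j (hmem j hj)
  rw [prod_pow_count t _ h123]
  have hc2 : (t.filter (fun j => Mmat n 2 3 1 i j = 2)).card = aFun n (i:ℕ) := by
    rw [ht, Finset.filter_filter]
    exact count2 n i
  have hc1 : (t.filter (fun j => Mmat n 2 3 1 i j = 1)).card = cFun n (i:ℕ) := by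
    rw [ht, Finset.filter_filter]
    exact count1 n hn i
  have hcardt : t.card = n - 1 := by
    have h : t = Finset.univ.erase i := by
      ext a; simp [ht, Finset.mem_erase]
    rw [h, Finset.card_erase_of_mem (Finset.mem_univ i), Finset.card_univ, Fintype.card_fin]
  have hp1 := Finset.card_filter_add_card_filter_not (s := t)
      (p := fun j => Mmat n 2 3 1 i j = 2)
  have e2 : (t.filter (fun j => ¬ Mmat n 2 3 1 i j = 2)).filter (fun j => Mmat n 2 3 1 i j = 1)
      = t.filter (fun j => Mmat n 2 3 1 i j = 1) := by
    rw [Finset.filter_filter]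
    apply Finset.filter_congr
    intro a _
    constructor
    · rintro ⟨_, h⟩; exact h
    · intro h; exact ⟨by omega, h⟩
  have e3 : (t.filter (fun j => ¬ Mmat n 2 3 1 i j = 2)).filter (fun j => ¬ Mmat n 2 3 1 i j = 1)
      = t.filter (fun j => Mmat n 2 3 1 i j = 3) := by
    rw [Finset.filter_filter]
    apply Finset.filter_congr
    intro a ha
    rcases h123 a ha with h | h | h
    · constructor
      · rintro ⟨_, hc⟩; omega
      · intro hc; omega
    · constructor
      · rintro ⟨hc, _⟩; omega
      · intro hc; omega
    · constructor
      · intro _; exact h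
      · intro _; exact ⟨by omega, by omega⟩
  have hp2 := Finset.card_filter_add_card_filter_not
      (s := t.filter (fun j => ¬ Mmat n 2 3 1 i j = 2))
      (p := fun j => Mmat n 2 3 1 i j = 1)
  rw [e2, e3] at hp2
  have hc3 : (t.filter (fun j => Mmat n 2 3 1 i j = 3)).card = bFun n (i:ℕ) := by
    unfold bFun
    omega
  rw [hc2, hc3]

lemma ab_inj (n : ℕ) (hn : 6 ≤ n) (i j : ℕ) (hi : i < n) (hj : j < n)
    (ha : aFun n i = aFun n j) (hb : bFun n i = bFun n j) : i = j := by
  simp only [aFun, bFun, cFun] at ha hb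
  split_ifs at ha hb <;> omega

lemma ab_sum (n : ℕ) (hn : 6 ≤ n) (i : ℕ) (hi : i < n) :
    n - 2 ≤ aFun n i + bFun n i ∧ aFun n i + bFun n i ≤ n - 1 := by
  simp only [aFun, bFun, cFun]
  split_ifs <;> omega

/-! ### Reduction of `pdeg` on the three components -/

section reduc
variable {n : ℕ} (w : Sym2 (Fin 5 ⊕ Fin 5 ⊕ Fin n) → ℕ)

lemma adj_inl_iff (i j : Fin 5) :
    (cliqueTriple 5 5 n).Adj (Sum.inl i) (Sum.inl j) ↔ ¬ j = i := by
  constructor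
  · rintro ⟨h1, -⟩ rfl; exact h1 rfl
  · intro h
    exact ⟨fun hc => h (by injection hc.symm), rfl⟩

lemma pdeg_inl (i : Fin 5) :
    pdeg (cliqueTriple 5 5 n) w (Sum.inl i)
      = ∏ j ∈ Finset.univ.filter (fun j : Fin 5 => ¬ j = i), w s(Sum.inl i, Sum.inl j) := by
  classical
  unfold pdeg
  rw [Finset.prod_filter, Finset.prod_filter, Fintype.prod_sum_type]
  have h2 : (∏ b : Fin 5 ⊕ Fin n,
      if (cliqueTriple 5 5 n).Adj (Sum.inl i) (Sum.inr b)
      then w s(Sum.inl i, Sum.inr b) else 1) = 1 := by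
    apply Finset.prod_eq_one
    intro b _
    rw [if_neg]
    rintro ⟨-, hc⟩
    rcases b with x | x <;> simp [comp3] at hc
  rw [h2, mul_one]
  apply Finset.prod_congr rfl
  intro j _
  by_cases h : j = i
  · rw [if_neg, if_neg (by simpa using h)]
    rw [adj_inl_iff]
    simpa using h
  · rw [if_pos ((adj_inl_iff i j).2 h), if_pos h]

lemma adj_mid_iff (i j : Fin 5) :
    (cliqueTriple 5 5 n).Adj (Sum.inr (Sum.inl i)) (Sum.inr (Sum.inl j)) ↔ ¬ j = i := by
  constructor
  · rintro ⟨h1, -⟩ rfl; exact h1 rfl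
  · intro h
    refine ⟨fun hc => h ?_, rfl⟩
    injection hc with hc'
    injection hc' with hc''
    exact hc''.symm

lemma pdeg_mid (i : Fin 5) :
    pdeg (cliqueTriple 5 5 n) w (Sum.inr (Sum.inl i))
      = ∏ j ∈ Finset.univ.filter (fun j : Fin 5 => ¬ j = i),
          w s(Sum.inr (Sum.inl i), Sum.inr (Sum.inl j)) := by
  classical
  unfold pdeg
  rw [Finset.prod_filter, Finset.prod_filter, Fintype.prod_sum_type]
  have h1 : (∏ a : Fin 5,
      if (cliqueTriple 5 5 n).Adj (Sum.inr (Sum.inl i)) (Sum.inl a)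
      then w s(Sum.inr (Sum.inl i), Sum.inl a) else 1) = 1 := by
    apply Finset.prod_eq_one
    intro a _
    rw [if_neg]
    rintro ⟨-, hc⟩
    simp [comp3] at hc
  rw [h1, one_mul, Fintype.prod_sum_type]
  have h3 : (∏ b : Fin n,
      if (cliqueTriple 5 5 n).Adj (Sum.inr (Sum.inl i)) (Sum.inr (Sum.inr b))
      then w s(Sum.inr (Sum.inl i), Sum.inr (Sum.inr b)) else 1) = 1 := by
    apply Finset.prod_eq_one
    intro b _
    rw [if_neg]
    rintro ⟨-, hc⟩
    simp [comp3] at hc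
  rw [h3, mul_one]
  apply Finset.prod_congr rfl
  intro j _
  by_cases h : j = i
  · rw [if_neg, if_neg (by simpa using h)]
    rw [adj_mid_iff]
    simpa using h
  · rw [if_pos ((adj_mid_iff i j).2 h), if_pos h]

lemma adj_right_iff (i j : Fin n) :
    (cliqueTriple 5 5 n).Adj (Sum.inr (Sum.inr i)) (Sum.inr (Sum.inr j)) ↔ ¬ j = i := by
  constructor
  · rintro ⟨h1, -⟩ rfl; exact h1 rfl
  · intro h
    refine ⟨fun hc => h ?_, rfl⟩
    injection hc with hc'
    injection hc' with hc''
    exact hc''.symm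

lemma pdeg_right (i : Fin n) :
    pdeg (cliqueTriple 5 5 n) w (Sum.inr (Sum.inr i))
      = ∏ j ∈ Finset.univ.filter (fun j : Fin n => ¬ j = i),
          w s(Sum.inr (Sum.inr i), Sum.inr (Sum.inr j)) := by
  classical
  unfold pdeg
  rw [Finset.prod_filter, Finset.prod_filter, Fintype.prod_sum_type]
  have h1 : (∏ a : Fin 5,
      if (cliqueTriple 5 5 n).Adj (Sum.inr (Sum.inr i)) (Sum.inl a)
      then w s(Sum.inr (Sum.inr i), Sum.inl a) else 1) = 1 := by
    apply Finset.prod_eq_one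
    intro a _
    rw [if_neg]
    rintro ⟨-, hc⟩
    simp [comp3] at hc
  rw [h1, one_mul, Fintype.prod_sum_type]
  have h2 : (∏ b : Fin 5,
      if (cliqueTriple 5 5 n).Adj (Sum.inr (Sum.inr i)) (Sum.inr (Sum.inl b))
      then w s(Sum.inr (Sum.inr i), Sum.inr (Sum.inl b)) else 1) = 1 := by
    apply Finset.prod_eq_one
    intro b _
    rw [if_neg]
    rintro ⟨-, hc⟩
    simp [comp3] at hc
  rw [h2, one_mul]
  apply Finset.prod_congr rfl
  intro j _
  by_cases h : j = i
  · rw [if_neg, if_neg (by simpa using h)]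
    rw [adj_right_iff]
    simpa using h
  · rw [if_pos ((adj_right_iff i j).2 h), if_pos h]

end reduc

/-! ### The two `K₅` labellings -/

def Amat : Fin 5 → Fin 5 → ℕ :=
  ![![1,2,2,2,1],![2,1,1,2,1],![2,1,1,3,1],![2,2,3,1,1],![1,1,1,1,1]]
def Bmat : Fin 5 → Fin 5 → ℕ :=
  ![![1,1,3,3,3],![1,1,1,1,2],![3,1,1,1,1],![3,1,1,1,3],![3,2,1,3,1]]
def pA : Fin 5 → ℕ := ![8,4,6,12,1]
def pB : Fin 5 → ℕ := ![27,2,3,9,18]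

lemma Amat_prod : ∀ i : Fin 5,
    ∏ j ∈ Finset.univ.filter (fun j : Fin 5 => ¬ j = i), Amat i j = pA i := by decide
lemma Bmat_prod : ∀ i : Fin 5,
    ∏ j ∈ Finset.univ.filter (fun j : Fin 5 => ¬ j = i), Bmat i j = pB i := by decide
lemma pA_inj : ∀ i j : Fin 5, pA i = pA j → i = j := by decide
lemma pB_inj : ∀ i j : Fin 5, pB i = pB j → i = j := by decide
lemma pApB : ∀ i j : Fin 5, ¬ pA i = pB j := by decide

def pAe : Fin 5 → ℕ × ℕ := ![(3,0),(2,0),(1,1),(2,1),(0,0)]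
def pBe : Fin 5 → ℕ × ℕ := ![(0,3),(1,0),(0,1),(0,2),(1,2)]
lemma pA_decomp : ∀ i : Fin 5, pA i = 2^(pAe i).1 * 3^(pAe i).2 ∧ (pAe i).1 + (pAe i).2 ≤ 3 := by
  decide
lemma pB_decomp : ∀ i : Fin 5, pB i = 2^(pBe i).1 * 3^(pBe i).2 ∧ (pBe i).1 + (pBe i).2 ≤ 3 := by
  decide
lemma Amat_mem : ∀ i j : Fin 5, ¬ j = i → Amat i j ∈ Finset.Icc 1 3 := by decide
lemma Bmat_mem : ∀ i j : Fin 5, ¬ j = i → Bmat i j ∈ Finset.Icc 1 3 := by decide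
lemma Amat_symm : ∀ i j : Fin 5, Amat i j = Amat j i := by decide
lemma Bmat_symm : ∀ i j : Fin 5, Bmat i j = Bmat j i := by decide
lemma card_ne5 : ∀ i : Fin 5, (Finset.univ.filter (fun j : Fin 5 => ¬ j = i)).card = 4 := by
  decide

/-! ### The global labelling -/

def fmat (n : ℕ) : (Fin 5 ⊕ Fin 5 ⊕ Fin n) → (Fin 5 ⊕ Fin 5 ⊕ Fin n) → ℕ
  | Sum.inl i, Sum.inl j => Amat i j
  | Sum.inr (Sum.inl i), Sum.inr (Sum.inl j) => Bmat i j
  | Sum.inr (Sum.inr i), Sum.inr (Sum.inr j) => Mmat n 2 3 1 i j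
  | _, _ => 1

lemma fmat_symm (n : ℕ) : ∀ a b, fmat n a b = fmat n b a := by
  rintro (i | i | i) (j | j | j)
  · exact Amat_symm i j
  · rfl
  · rfl
  · rfl
  · exact Bmat_symm i j
  · rfl
  · rfl
  · rfl
  · exact Mmat_symm n 2 3 1 i j

noncomputable def wlab (n : ℕ) : Sym2 (Fin 5 ⊕ Fin 5 ⊕ Fin n) → ℕ :=
  Sym2.lift ⟨fun a b => fmat n a b, fun a b => fmat_symm n a b⟩

lemma wlab_mk (n : ℕ) (a b : Fin 5 ⊕ Fin 5 ⊕ Fin n) : wlab n s(a, b) = fmat n a b := by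
  simp [wlab]

lemma pdeg_wlab_inl (n : ℕ) (i : Fin 5) :
    pdeg (cliqueTriple 5 5 n) (wlab n) (Sum.inl i) = pA i := by
  rw [pdeg_inl]
  rw [show (fun j : Fin 5 => wlab n s(Sum.inl i, Sum.inl j)) = fun j => Amat i j from
    funext fun j => wlab_mk n _ _]
  exact Amat_prod i

lemma pdeg_wlab_mid (n : ℕ) (i : Fin 5) :
    pdeg (cliqueTriple 5 5 n) (wlab n) (Sum.inr (Sum.inl i)) = pB i := by
  rw [pdeg_mid]
  rw [show (fun j : Fin 5 => wlab n s(Sum.inr (Sum.inl i), Sum.inr (Sum.inl j)))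
      = fun j => Bmat i j from funext fun j => wlab_mk n _ _]
  exact Bmat_prod i

lemma pdeg_wlab_right (n : ℕ) (hn : 6 ≤ n) (i : Fin n) :
    pdeg (cliqueTriple 5 5 n) (wlab n) (Sum.inr (Sum.inr i))
      = 2 ^ aFun n (i:ℕ) * 3 ^ bFun n (i:ℕ) := by
  rw [pdeg_right]
  rw [show (fun j : Fin n => wlab n s(Sum.inr (Sum.inr i), Sum.inr (Sum.inr j)))
      = fun j => Mmat n 2 3 1 i j from funext fun j => wlab_mk n _ _]
  exact prodM n hn i

lemma wlab_mem (n : ℕ) : ∀ u v, (cliqueTriple 5 5 n).Adj u v →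
    wlab n s(u, v) ∈ Finset.Icc 1 3 := by
  rintro (i | i | i) (j | j | j) hadj
  · rw [wlab_mk]
    exact Amat_mem i j ((adj_inl_iff i j).1 hadj)
  · exact absurd hadj.2 (by simp [comp3])
  · exact absurd hadj.2 (by simp [comp3])
  · exact absurd hadj.2 (by simp [comp3])
  · rw [wlab_mk]
    exact Bmat_mem i j ((adj_mid_iff i j).1 hadj)
  · exact absurd hadj.2 (by simp [comp3])
  · exact absurd hadj.2 (by simp [comp3])
  · exact absurd hadj.2 (by simp [comp3])
  · rw [wlab_mk]
    show Mmat n 2 3 1 i j ∈ Finset.Icc 1 3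
    have hij : ¬ j = i := (adj_right_iff i j).1 hadj
    rcases M_entry123 i j hij with h | h | h <;> rw [h] <;> decide

lemma wlab_PI (n : ℕ) (hn : 6 ≤ n) : ProductIrregular (cliqueTriple 5 5 n) (wlab n) := by
  have hAright : ∀ (i : Fin 5) (k : Fin n), pA i ≠ 2 ^ aFun n (k:ℕ) * 3 ^ bFun n (k:ℕ) := by
    intro i k h
    rw [(pA_decomp i).1] at h
    obtain ⟨h1, h2⟩ := pow23 h
    have hs := (ab_sum n hn k k.isLt).1
    have hd := (pA_decomp i).2
    omega
  have hBright : ∀ (i : Fin 5) (k : Fin n), pB i ≠ 2 ^ aFun n (k:ℕ) * 3 ^ bFun n (k:ℕ) := by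
    intro i k h
    rw [(pB_decomp i).1] at h
    obtain ⟨h1, h2⟩ := pow23 h
    have hs := (ab_sum n hn k k.isLt).1
    have hd := (pB_decomp i).2
    omega
  rintro (i | i | i) (j | j | j) h
  · rw [pdeg_wlab_inl, pdeg_wlab_inl] at h
    exact congrArg Sum.inl (pA_inj i j h)
  · rw [pdeg_wlab_inl, pdeg_wlab_mid] at h
    exact absurd h (pApB i j)
  · rw [pdeg_wlab_inl, pdeg_wlab_right n hn] at h
    exact absurd h (hAright i j)
  · rw [pdeg_wlab_mid, pdeg_wlab_inl] at h
    exact absurd h.symm (pApB j i)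
  · rw [pdeg_wlab_mid, pdeg_wlab_mid] at h
    exact congrArg (Sum.inr ∘ Sum.inl) (pB_inj i j h)
  · rw [pdeg_wlab_mid, pdeg_wlab_right n hn] at h
    exact absurd h (hBright i j)
  · rw [pdeg_wlab_right n hn, pdeg_wlab_inl] at h
    exact absurd h.symm (hAright j i)
  · rw [pdeg_wlab_right n hn, pdeg_wlab_mid] at h
    exact absurd h.symm (hBright j i)
  · rw [pdeg_wlab_right n hn, pdeg_wlab_right n hn] at h
    obtain ⟨h1, h2⟩ := pow23 h
    have := ab_inj n hn i j i.isLt j.isLt h1 h2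
    exact congrArg (Sum.inr ∘ Sum.inr) (Fin.ext this)

lemma lower_bound (n : ℕ) (hn : 6 ≤ n) :
    ∀ w : Sym2 (Fin 5 ⊕ Fin 5 ⊕ Fin n) → ℕ,
      (∀ u v, (cliqueTriple 5 5 n).Adj u v → w s(u, v) ∈ Finset.Icc 1 2) →
      ¬ ProductIrregular (cliqueTriple 5 5 n) w := by
  intro w hw hPI
  classical
  set emb : Fin 5 ⊕ Fin 5 → Fin 5 ⊕ Fin 5 ⊕ Fin n :=
    Sum.elim Sum.inl (fun x => Sum.inr (Sum.inl x)) with hemb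
  have hdvd : ∀ x : Fin 5 ⊕ Fin 5, pdeg (cliqueTriple 5 5 n) w (emb x) ∣ 16 := by
    rintro (i | i)
    · show pdeg (cliqueTriple 5 5 n) w (Sum.inl i) ∣ 16
      rw [pdeg_inl]
      have hd : ∏ j ∈ Finset.univ.filter (fun j : Fin 5 => ¬ j = i),
          w s(Sum.inl i, Sum.inl j) ∣ ∏ _j ∈ Finset.univ.filter (fun j : Fin 5 => ¬ j = i), 2 := by
        apply Finset.prod_dvd_prod_of_dvd
        intro j hj
        have hj' : ¬ j = i := by simpa using hj
        have hmem := Finset.mem_Icc.1 (hw _ _ ((adj_inl_iff i j).2 hj'))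
        have : w s(Sum.inl i, Sum.inl j) = 1 ∨ w s(Sum.inl i, Sum.inl j) = 2 := by omega
        rcases this with h | h <;> rw [h] <;> norm_num
      rw [Finset.prod_const, card_ne5 i] at hd
      exact hd
    · show pdeg (cliqueTriple 5 5 n) w (Sum.inr (Sum.inl i)) ∣ 16
      rw [pdeg_mid]
      have hd : ∏ j ∈ Finset.univ.filter (fun j : Fin 5 => ¬ j = i),
          w s(Sum.inr (Sum.inl i), Sum.inr (Sum.inl j))
            ∣ ∏ _j ∈ Finset.univ.filter (fun j : Fin 5 => ¬ j = i), 2 := by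
        apply Finset.prod_dvd_prod_of_dvd
        intro j hj
        have hj' : ¬ j = i := by simpa using hj
        have hmem := Finset.mem_Icc.1 (hw _ _ ((adj_mid_iff i j).2 hj'))
        have : w s(Sum.inr (Sum.inl i), Sum.inr (Sum.inl j)) = 1 ∨
            w s(Sum.inr (Sum.inl i), Sum.inr (Sum.inl j)) = 2 := by omega
        rcases this with h | h <;> rw [h] <;> norm_num
      rw [Finset.prod_const, card_ne5 i] at hd
      exact hd
  have hembinj : Function.Injective emb := by
    rintro (x | x) (y | y) h <;> simp [hemb] at h <;> simp [h]
  have hcard := Finset.card_le_card_of_injOn (f := fun x => pdeg (cliqueTriple 5 5 n) w (emb x))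
      (s := (Finset.univ : Finset (Fin 5 ⊕ Fin 5))) (t := Nat.divisors 16)
      (fun x _ => Nat.mem_divisors.2 ⟨hdvd x, by norm_num⟩)
      (fun x _ y _ hxy => hembinj (hPI hxy))
  rw [Finset.card_univ] at hcard
  have h10 : Fintype.card (Fin 5 ⊕ Fin 5) = 10 := by simp
  have h5 : (Nat.divisors 16).card = 5 := by decide
  omega

/-- For all `n ≥ 6`, `ps (K_5 + K_5 + K_n) = 3`: there is a product-irregular labelling
with labels in `{1,2,3}`, and none with labels in `{1,2}`. -/
theorem stmt_17 (n : ℕ) (hn : 6 ≤ n) :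
    ps (cliqueTriple 5 5 n) = 3 ∧
    (∃ w : Sym2 (Fin 5 ⊕ Fin 5 ⊕ Fin n) → ℕ,
      (∀ u v, (cliqueTriple 5 5 n).Adj u v → w s(u, v) ∈ Finset.Icc 1 3) ∧
      ProductIrregular (cliqueTriple 5 5 n) w) ∧
    (∀ w : Sym2 (Fin 5 ⊕ Fin 5 ⊕ Fin n) → ℕ,
      (∀ u v, (cliqueTriple 5 5 n).Adj u v → w s(u, v) ∈ Finset.Icc 1 2) →
      ¬ ProductIrregular (cliqueTriple 5 5 n) w) := by
  have hup : ∃ w : Sym2 (Fin 5 ⊕ Fin 5 ⊕ Fin n) → ℕ,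
      (∀ u v, (cliqueTriple 5 5 n).Adj u v → w s(u, v) ∈ Finset.Icc 1 3) ∧
      ProductIrregular (cliqueTriple 5 5 n) w :=
    ⟨wlab n, wlab_mem n, wlab_PI n hn⟩
  have hlow := lower_bound n hn
  refine ⟨?_, hup, hlow⟩
  have h3S : 3 ∈ {s : ℕ | ∃ w : Sym2 (Fin 5 ⊕ Fin 5 ⊕ Fin n) → ℕ,
      (∀ u v, (cliqueTriple 5 5 n).Adj u v → w s(u, v) ∈ Finset.Icc 1 s) ∧
      ProductIrregular (cliqueTriple 5 5 n) w} := hup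
  have hlb : ∀ m ∈ {s : ℕ | ∃ w : Sym2 (Fin 5 ⊕ Fin 5 ⊕ Fin n) → ℕ,
      (∀ u v, (cliqueTriple 5 5 n).Adj u v → w s(u, v) ∈ Finset.Icc 1 s) ∧
      ProductIrregular (cliqueTriple 5 5 n) w}, 3 ≤ m := by
    rintro m ⟨w, hw, hPI⟩
    by_contra hc
    push_neg at hc
    refine hlow w (fun u v huv => ?_) hPI
    have := Finset.mem_Icc.1 (hw u v huv)
    exact Finset.mem_Icc.2 ⟨this.1, by omega⟩
  exact le_antisymm (Nat.sInf_le h3S) (le_csInf ⟨3, h3S⟩ hlb)
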